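/- arXiv:1310.0546 — 3 statements merged into one kernel-verified Lean document; each statement's English description precedes it below -/
import Mathlib

section
/- The map sending s_1 to σ_n and s_i (for i ≥ 2) to σ_{n+i-1}·σ_{n-i+1} extends to a group homomorphism Ψ from the Artin group A(B_n) to the braid group B_{2n}, i.e., the images of the generators satisfy all the defining relations of A(B_n). -/
/-- Braid relations on `m` generators `σ_1,…,σ_m` (generator `i : Fin m` is `σ_{i+1}`). -/
def braidRels (m : ℕ) : Set (FreeGroup (Fin m)) :=
  {r | (∃ i j : Fin m, (i : ℕ) + 1 = (j : ℕ) ∧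
      r = .of i * .of j * .of i * (.of j * .of i * .of j)⁻¹) ∨
    (∃ i j : Fin m, (i : ℕ) + 2 ≤ (j : ℕ) ∧
      r = .of i * .of j * (.of j * .of i)⁻¹)}

/-- The braid group on `m+1` strands, with `m` Artin generators. -/
abbrev BraidGroup (m : ℕ) := PresentedGroup (braidRels m)

/-- The Artin generator `σ_k` (`1 ≤ k ≤ m`) of the braid group. -/
noncomputable def σ {m : ℕ} (k : ℕ) : BraidGroup m :=
  if h : 1 ≤ k ∧ k ≤ m then PresentedGroup.of (⟨k - 1, by omega⟩ : Fin m) else 1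

/-- Type `B_n` Artin relations on generators `s_1,…,s_n` (generator `i : Fin n` is `s_{i+1}`). -/
def typeBRels (n : ℕ) : Set (FreeGroup (Fin n)) :=
  {r | (∃ i j : Fin n, (i : ℕ) = 0 ∧ (j : ℕ) = 1 ∧
      r = .of i * .of j * .of i * .of j * (.of j * .of i * .of j * .of i)⁻¹) ∨
    (∃ i j : Fin n, 1 ≤ (i : ℕ) ∧ (i : ℕ) + 1 = (j : ℕ) ∧
      r = .of i * .of j * .of i * (.of j * .of i * .of j)⁻¹) ∨
    (∃ i j : Fin n, (i : ℕ) + 2 ≤ (j : ℕ) ∧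
      r = .of i * .of j * (.of j * .of i)⁻¹)}

/-- The Artin group of type `B_n`. -/
abbrev ArtinB (n : ℕ) := PresentedGroup (typeBRels n)

/-- The standard generator `s_k` (`1 ≤ k ≤ n`) of `A(B_n)`. -/
noncomputable def s {n : ℕ} (k : ℕ) : ArtinB n :=
  if h : 1 ≤ k ∧ k ≤ n then PresentedGroup.of (⟨k - 1, by omega⟩ : Fin n) else 1

/- ### Auxiliary lemmas -/

lemma rel_eq_one {α : Type*} {rels : Set (FreeGroup α)} {r : FreeGroup α} (hr : r ∈ rels) :
    PresentedGroup.mk rels r = 1 :=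
  (QuotientGroup.eq_one_iff r).mpr (Subgroup.subset_normalClosure hr)

lemma sigma_braid {m i : ℕ} (h1 : 1 ≤ i) (h2 : i + 1 ≤ m) :
    σ (m := m) i * σ (i+1) * σ i = σ (i+1) * σ i * σ (i+1) := by
  have hi : 1 ≤ i ∧ i ≤ m := ⟨h1, by omega⟩
  have hj : 1 ≤ i + 1 ∧ i + 1 ≤ m := ⟨by omega, h2⟩
  rw [σ, σ, dif_pos hi, dif_pos hj]
  have h := rel_eq_one (rels := braidRels m)
    (Or.inl ⟨⟨i - 1, by omega⟩, ⟨i + 1 - 1, by omega⟩, by simp; omega, rfl⟩)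
  simp only [map_mul, map_inv, mul_inv_eq_one] at h
  exact h

lemma sigma_comm {m i j : ℕ} (h1 : 1 ≤ i) (h2 : i + 2 ≤ j) (h3 : j ≤ m) :
    σ (m := m) i * σ j = σ j * σ i := by
  have hi : 1 ≤ i ∧ i ≤ m := ⟨h1, by omega⟩
  have hj : 1 ≤ j ∧ j ≤ m := ⟨by omega, h3⟩
  rw [σ, σ, dif_pos hi, dif_pos hj]
  have h := rel_eq_one (rels := braidRels m)
    (Or.inr ⟨⟨i - 1, by omega⟩, ⟨j - 1, by omega⟩, by simp; omega, rfl⟩)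
  simp only [map_mul, map_inv, mul_inv_eq_one] at h
  exact h

section keys
variable {G : Type*} [Group G]

lemma key1 (a b c : G) (hab : a*b*a = b*a*b) (hbc : b*c*b = c*b*c) (hac : a*c = c*a) :
    b*(c*a)*b*(c*a) = c*a*b*(c*a)*b := by
  calc b*(c*a)*b*(c*a)
      = b*c*a*b*(c*a) := by group
    _ = b*c*a*b*(a*c) := by rw [hac]
    _ = b*c*(a*b*a)*c := by group
    _ = b*c*(b*a*b)*c := by rw [hab]
    _ = (b*c*b)*(a*b*c) := by group
    _ = (c*b*c)*(a*b*c) := by rw [hbc]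
    _ = c*b*(c*a)*(b*c) := by group
    _ = c*b*(a*c)*(b*c) := by rw [← hac]
    _ = c*b*a*(c*b*c) := by group
    _ = c*b*a*(b*c*b) := by rw [← hbc]
    _ = c*(b*a*b)*(c*b) := by group
    _ = c*(a*b*a)*(c*b) := by rw [← hab]
    _ = c*a*b*(a*c)*b := by group
    _ = c*a*b*(c*a)*b := by rw [hac]

lemma key2 (a b c d : G) (hab : a*b*a = b*a*b) (hcd : c*d*c = d*c*d)
    (hac : a*c = c*a) (had : a*d = d*a) (hbc : b*c = c*b) (hbd : b*d = d*b) :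
    c*b*(d*a)*(c*b) = d*a*(c*b)*(d*a) := by
  calc c*b*(d*a)*(c*b)
      = c*(b*d)*a*c*b := by group
    _ = c*(d*b)*a*c*b := by rw [hbd]
    _ = c*d*b*(a*c)*b := by group
    _ = c*d*b*(c*a)*b := by rw [hac]
    _ = c*d*(b*c)*(a*b) := by group
    _ = c*d*(c*b)*(a*b) := by rw [hbc]
    _ = (c*d*c)*(b*a*b) := by group
    _ = (d*c*d)*(b*a*b) := by rw [hcd]
    _ = d*c*d*(a*b*a) := by rw [← hab]
    _ = d*c*(d*a)*(b*a) := by group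
    _ = d*c*(a*d)*(b*a) := by rw [← had]
    _ = d*(c*a)*(d*b)*a := by group
    _ = d*(a*c)*(d*b)*a := by rw [← hac]
    _ = d*a*c*(d*b)*a := by group
    _ = d*a*c*(b*d)*a := by rw [← hbd]
    _ = d*a*(c*b)*(d*a) := by group

end keys

/-- The map sending `s_1 ↦ σ_n` and `s_i ↦ σ_{n+i-1} σ_{n-i+1}` for `i ≥ 2` extends to a
group homomorphism `Ψ : A(B_n) → B_{2n}`. -/
theorem stmt_0 (n : ℕ) (hn : 1 ≤ n) :
    ∃ Ψ : ArtinB n →* BraidGroup (2 * n),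
      Ψ (s 1) = σ n ∧
      ∀ i : ℕ, 2 ≤ i → i ≤ n → Ψ (s i) = σ (n + i - 1) * σ (n - i + 1) := by
  set f : Fin n → BraidGroup (2 * n) :=
    fun i => if (i : ℕ) = 0 then σ n else σ (n + (i : ℕ)) * σ (n - (i : ℕ)) with hf
  have hrels : ∀ r ∈ typeBRels n, FreeGroup.lift f r = 1 := by
    rintro r (⟨i, j, hi, hj, rfl⟩ | ⟨i, j, hi1, hij, rfl⟩ | ⟨i, j, hij, rfl⟩)
    · -- s1 s2 s1 s2 = s2 s1 s2 s1
      have hn2 : 2 ≤ n := by have := j.isLt; omega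
      simp only [map_mul, map_inv, FreeGroup.lift_apply_of, mul_inv_eq_one, hf, hi, hj,
        if_pos, if_neg (by omega : ¬ (1:ℕ) = 0)]
      have e : n - 1 + 1 = n := by omega
      have hab := sigma_braid (m := 2*n) (i := n-1) (by omega) (by omega)
      rw [e] at hab
      have hbc := sigma_braid (m := 2*n) (i := n) (by omega) (by omega)
      have hac := sigma_comm (m := 2*n) (i := n-1) (j := n+1) (by omega) (by omega) (by omega)
      exact key1 (σ (n-1)) (σ n) (σ (n+1)) hab hbc hac
    · -- s_i s_{i+1} s_i = s_{i+1} s_i s_{i+1}, i ≥ 2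
      set t := (i : ℕ) with ht
      have htn : t + 2 ≤ n := by have := j.isLt; omega
      simp only [map_mul, map_inv, FreeGroup.lift_apply_of, mul_inv_eq_one, hf, ← hij,
        if_neg (by omega : ¬ t = 0), if_neg (by omega : ¬ t + 1 = 0)]
      have e1 : n - (t+1) + 1 = n - t := by omega
      have e3 : n + (t+1) = n + t + 1 := by omega
      have hab := sigma_braid (m := 2*n) (i := n-(t+1)) (by omega) (by omega)
      rw [e1] at hab
      have hcd := sigma_braid (m := 2*n) (i := n+t) (by omega) (by omega)
      rw [← e3] at hcd
      have hac := sigma_comm (m := 2*n) (i := n-(t+1)) (j := n+t) (by omega) (by omega) (by omega)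
      have had := sigma_comm (m := 2*n) (i := n-(t+1)) (j := n+(t+1)) (by omega) (by omega) (by omega)
      have hbc := sigma_comm (m := 2*n) (i := n-t) (j := n+t) (by omega) (by omega) (by omega)
      have hbd := sigma_comm (m := 2*n) (i := n-t) (j := n+(t+1)) (by omega) (by omega) (by omega)
      rw [← ht, if_neg (by omega : ¬ t = 0)]
      exact key2 (σ (n-(t+1)) : BraidGroup (2*n)) (σ (n-t)) (σ (n+t)) (σ (n+(t+1)))
        hab hcd hac had hbc hbd
    · -- commuting relation
      set t := (i : ℕ) with ht
      set u := (j : ℕ) with hu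
      have hun : u + 1 ≤ n := j.isLt
      simp only [map_mul, map_inv, FreeGroup.lift_apply_of, mul_inv_eq_one, hf]
      by_cases h0 : t = 0
      · rw [if_pos h0, if_neg (by omega : ¬ u = 0)]
        have c1 : Commute (σ n : BraidGroup (2*n)) (σ (n+u)) :=
          sigma_comm (by omega) (by omega) (by omega)
        have c2 : Commute (σ n : BraidGroup (2*n)) (σ (n-u)) :=
          (sigma_comm (m := 2*n) (i := n-u) (j := n) (by omega) (by omega) (by omega)).symm
        exact (c1.mul_right c2).eq
      · rw [if_neg h0, if_neg (by omega : ¬ u = 0)]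
        have c1 : Commute (σ (n+t) : BraidGroup (2*n)) (σ (n+u)) :=
          sigma_comm (by omega) (by omega) (by omega)
        have c2 : Commute (σ (n+t) : BraidGroup (2*n)) (σ (n-u)) :=
          (sigma_comm (m := 2*n) (i := n-u) (j := n+t) (by omega) (by omega) (by omega)).symm
        have c3 : Commute (σ (n-t) : BraidGroup (2*n)) (σ (n+u)) :=
          sigma_comm (by omega) (by omega) (by omega)
        have c4 : Commute (σ (n-t) : BraidGroup (2*n)) (σ (n-u)) :=
          (sigma_comm (m := 2*n) (i := n-u) (j := n-t) (by omega) (by omega) (by omega)).symm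
        exact ((c1.mul_right c2).mul_left (c3.mul_right c4)).eq
  refine ⟨PresentedGroup.toGroup hrels, ?_, ?_⟩
  · rw [s, dif_pos ⟨le_refl 1, hn⟩, PresentedGroup.toGroup.of]
    simp [hf]
  · intro k hk2 hkn
    rw [s, dif_pos ⟨by omega, hkn⟩, PresentedGroup.toGroup.of]
    simp only [hf]
    rw [if_neg (show ¬ ((⟨k-1, by omega⟩ : Fin n) : ℕ) = 0 by show ¬ (k-1) = 0; omega)]
    have e1 : n + ((⟨k-1, by omega⟩ : Fin n) : ℕ) = n + k - 1 := by
      show n + (k-1) = n + k - 1; omega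
    have e2 : n - ((⟨k-1, by omega⟩ : Fin n) : ℕ) = n - k + 1 := by
      show n - (k-1) = n - k + 1; omega
    rw [e1, e2]
end

section
/- Let G be a group with generating set S containing an element Δ such that Δx⁻¹ ∈ S and x⁻¹Δ ∈ S for all x ∈ S. Then every β ∈ G with word length ℓ over S ∪ S⁻¹ using n negative letters in some geodesic expression can also be written as z'_ℓ⁻¹⋯z'_1⁻¹·Δ^{ℓ−n} for some z'_1,…,z'_ℓ ∈ S. -/
private lemma conj_mem_S {G : Type*} [Group G] (S : Set G) (Δ : G)
    (hc1 : ∀ x ∈ S, Δ * x⁻¹ ∈ S) : ∀ x ∈ S, Δ * x * Δ⁻¹ ∈ S := by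
  intro x hx
  have := hc1 _ (hc1 x hx)
  simpa [mul_assoc] using this

private lemma conj_prod {G : Type*} [Group G] (Δ : G) (z : List G) :
    Δ * (z.map fun w => w⁻¹).prod =
      ((z.map fun w => Δ * w * Δ⁻¹).map fun w => w⁻¹).prod * Δ := by
  induction z with
  | nil => simp
  | cons a t ih =>
    simp only [List.map_cons, List.prod_cons]
    rw [show Δ * (a⁻¹ * (t.map fun w => w⁻¹).prod)
        = (Δ * a * Δ⁻¹)⁻¹ * (Δ * (t.map fun w => w⁻¹).prod) by group, ih]
    group

private lemma aux_main {G : Type*} [Group G] (S : Set G) (Δ : G)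
    (hc1 : ∀ x ∈ S, Δ * x⁻¹ ∈ S) :
    ∀ L : List (G × Bool), (∀ p ∈ L, p.1 ∈ S) →
      ∃ z : List G, z.length = L.length ∧ (∀ w ∈ z, w ∈ S) ∧
        (L.map fun p => if p.2 then p.1 else p.1⁻¹).prod =
          (z.map fun w => w⁻¹).prod * Δ ^ (L.filter fun p => p.2).length := by
  intro L
  induction L with
  | nil => intro _; exact ⟨[], by simp, by simp, by simp⟩
  | cons p t ih =>
    intro hmem
    obtain ⟨z, hzl, hzS, hzp⟩ := ih fun q hq => hmem q (List.mem_cons_of_mem _ hq)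
    have hpS : p.1 ∈ S := hmem p List.mem_cons_self
    by_cases hb : p.2
    · refine ⟨(Δ * p.1⁻¹) :: (z.map fun w => Δ * w * Δ⁻¹), by simp [hzl], ?_, ?_⟩
      · intro w hw
        rcases List.mem_cons.mp hw with h | h
        · exact h ▸ hc1 _ hpS
        · obtain ⟨a, ha, rfl⟩ := List.mem_map.mp h
          exact conj_mem_S S Δ hc1 a (hzS a ha)
      · have hfl : ((p :: t).filter fun q => q.2).length
            = (t.filter fun q => q.2).length + 1 := by
          simp [List.filter_cons, hb]
        have key := conj_prod Δ z
        simp only [List.map_cons, List.prod_cons, hb, if_true, hzp, hfl]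
        rw [pow_succ']
        rw [show (Δ * p.1⁻¹)⁻¹ * ((z.map fun w => Δ * w * Δ⁻¹).map fun w => w⁻¹).prod
            * (Δ * Δ ^ (t.filter fun q => q.2).length)
            = (Δ * p.1⁻¹)⁻¹ * (((z.map fun w => Δ * w * Δ⁻¹).map fun w => w⁻¹).prod * Δ)
              * Δ ^ (t.filter fun q => q.2).length by group, ← key]
        group
    · refine ⟨p.1 :: z, by simp [hzl], ?_, ?_⟩
      · intro w hw
        rcases List.mem_cons.mp hw with h | h
        · exact h ▸ hpS
        · exact hzS w h
      · simp [hb, hzp, List.filter_cons, mul_assoc]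

/-- If `S ∋ Δ` is closed under `x ↦ Δx⁻¹` and `x ↦ x⁻¹Δ`, then any `β` with a geodesic
expression over `S ∪ S⁻¹` of length `ℓ` with `n` negative letters can be written as
`z'_ℓ⁻¹ ⋯ z'_1⁻¹ · Δ^{ℓ-n}` with `z'_i ∈ S`. -/
theorem stmt_3 {G : Type*} [Group G] (S : Set G) (Δ : G)
    (hgen : Subgroup.closure S = ⊤) (hΔ : Δ ∈ S)
    (hc1 : ∀ x ∈ S, Δ * x⁻¹ ∈ S) (hc2 : ∀ x ∈ S, x⁻¹ * Δ ∈ S)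
    (β : G) (ℓ n : ℕ) (L : List (G × Bool)) (hL : ∀ p ∈ L, p.1 ∈ S)
    (hβ : β = (L.map fun p => if p.2 then p.1 else p.1⁻¹).prod)
    (hlen : L.length = ℓ) (hneg : (L.filter fun p => !p.2).length = n)
    (hgeo : ∀ L' : List (G × Bool), (∀ p ∈ L', p.1 ∈ S) →
      β = (L'.map fun p => if p.2 then p.1 else p.1⁻¹).prod → ℓ ≤ L'.length) :
    ∃ z : List G, z.length = ℓ ∧ (∀ w ∈ z, w ∈ S) ∧
      β = (z.map fun w => w⁻¹).prod * Δ ^ ((ℓ : ℤ) - (n : ℤ)) := by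
  obtain ⟨z, hzl, hzS, hzp⟩ := aux_main S Δ hc1 L hL
  have hsplit : (L.filter fun p => p.2).length + (L.filter fun p => !p.2).length
      = L.length := by
    simpa using (List.length_eq_length_filter_add (l := L) (fun p => p.2)).symm
  refine ⟨z, hzl.trans hlen, hzS, ?_⟩
  have : ((ℓ : ℤ) - (n : ℤ)) = ((L.filter fun p => p.2).length : ℤ) := by
    omega
  rw [this, zpow_natCast, hβ, hzp]
end

section
/- Let G be a group with a generating set S containing Δ, closed under x ↦ Δx⁻¹ and x ↦ x⁻¹Δ, and suppose there are functions L, Smin : G → ℤ such that: (a) L(β) equals the S-positive word length of β whenever β is a product of elements of S, and Smin(β) ≥ 0 in that case; (b) Smin(β) = −(positive length of β⁻¹) and L(β) ≤ 0 whenever β⁻¹ is a product of elements of S; (c) L(βΔ^k) = L(β) + k and Smin(βΔ^k) = Smin(β) + k for all β ∈ G and k ∈ ℤ. Then for every β ∈ G, the word length of β over S ∪ S⁻¹ equals max{L(β), 0} − min{Smin(β), 0}. -/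
/-- The positive word length of `β` over `S`: the least number of factors from `S`
needed to express `β` as a product (junk value `0` if `β` is not such a product). -/
noncomputable def posLen {G : Type*} [Group G] (S : Set G) (β : G) : ℕ :=
  sInf {k | ∃ z : List G, z.length = k ∧ (∀ w ∈ z, w ∈ S) ∧ z.prod = β}

/-- The word length of `β` over `S ∪ S⁻¹`. -/
noncomputable def wlen {G : Type*} [Group G] (S : Set G) (β : G) : ℕ :=
  sInf {k | ∃ z : List (G × Bool), z.length = k ∧ (∀ p ∈ z, p.1 ∈ S) ∧
    (z.map fun p => if p.2 then p.1 else p.1⁻¹).prod = β}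

section Helpers

variable {G : Type*} [Group G] {S : Set G} {Δ : G}

private lemma map_conj_prod (a : G) (y : List G) :
    (y.map fun s => a * s * a⁻¹).prod = a * y.prod * a⁻¹ := by
  induction y with
  | nil => simp
  | cons x t ih =>
    simp only [List.map_cons, List.prod_cons, ih]
    group

private lemma map_conj_prod' (a : G) (y : List G) :
    (y.map fun s => a⁻¹ * s * a).prod = a⁻¹ * y.prod * a := by
  induction y with
  | nil => simp
  | cons x t ih =>
    simp only [List.map_cons, List.prod_cons, ih]
    group

private lemma inv_rev_prod (y : List G) :
    (y.reverse.map fun x => x⁻¹).prod = y.prod⁻¹ := by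
  induction y with
  | nil => simp
  | cons x t ih =>
    rw [List.reverse_cons, List.map_append, List.prod_append, ih]
    simp [mul_inv_rev]

private lemma word_inv_prod (z : List (G × Bool)) :
    ((z.reverse.map fun p => (p.1, !p.2)).map fun p => if p.2 then p.1 else p.1⁻¹).prod
      = ((z.map fun p => if p.2 then p.1 else p.1⁻¹).prod)⁻¹ := by
  induction z with
  | nil => simp
  | cons p t ih =>
    obtain ⟨x, bb⟩ := p
    rw [List.reverse_cons, List.map_append, List.map_append, List.prod_append, ih]
    cases bb <;> simp [mul_inv_rev]

private lemma tau_mem (hc2 : ∀ x ∈ S, x⁻¹ * Δ ∈ S) {x : G} (hx : x ∈ S) :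
    Δ⁻¹ * x * Δ ∈ S := by
  have h2 := hc2 _ (hc2 x hx)
  simpa [mul_inv_rev] using h2

private lemma tau'_mem (hc1 : ∀ x ∈ S, Δ * x⁻¹ ∈ S) {x : G} (hx : x ∈ S) :
    Δ * x * Δ⁻¹ ∈ S := by
  have h2 := hc1 _ (hc1 x hx)
  simpa [mul_inv_rev, mul_assoc] using h2

private lemma tauPow (hc2 : ∀ x ∈ S, x⁻¹ * Δ ∈ S) (n : ℕ) {x : G} (hx : x ∈ S) :
    (Δ ^ n)⁻¹ * x * Δ ^ n ∈ S := by
  induction n with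
  | zero => simpa using hx
  | succ n ih =>
    have h := tau_mem hc2 ih
    have : Δ⁻¹ * ((Δ ^ n)⁻¹ * x * Δ ^ n) * Δ = (Δ ^ (n + 1))⁻¹ * x * Δ ^ (n + 1) := by
      rw [pow_succ, mul_inv_rev]
      group
    rwa [this] at h

private lemma tauPow' (hc1 : ∀ x ∈ S, Δ * x⁻¹ ∈ S) (n : ℕ) {x : G} (hx : x ∈ S) :
    Δ ^ n * x * (Δ ^ n)⁻¹ ∈ S := by
  induction n with
  | zero => simpa using hx
  | succ n ih =>
    have h := tau'_mem hc1 ih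
    have : Δ * (Δ ^ n * x * (Δ ^ n)⁻¹) * Δ⁻¹ = Δ ^ (n + 1) * x * (Δ ^ (n + 1))⁻¹ := by
      rw [pow_succ', mul_inv_rev]
      group
    rwa [this] at h

/-- The inverse of a positive word of length `n`, premultiplied by `Δ ^ n`, is positive. -/
private lemma invLeft (hc1 : ∀ x ∈ S, Δ * x⁻¹ ∈ S) :
    ∀ z : List G, (∀ w ∈ z, w ∈ S) →
      ∃ y : List G, y.length = z.length ∧ (∀ w ∈ y, w ∈ S) ∧
        y.prod = Δ ^ z.length * z.prod⁻¹ := by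
  intro z
  induction z with
  | nil => exact fun _ => ⟨[], rfl, by simp, by simp⟩
  | cons x t ih =>
    intro hz
    obtain ⟨y, hl, hS, hp⟩ := ih (fun w hw => hz w (List.mem_cons_of_mem _ hw))
    refine ⟨(y.map fun s => Δ * s * Δ⁻¹) ++ [Δ * x⁻¹], by simp [hl], ?_, ?_⟩
    · intro w hw
      rcases List.mem_append.1 hw with h | h
      · obtain ⟨s, hs, rfl⟩ := List.mem_map.1 h
        exact tau'_mem hc1 (hS s hs)
      · simp only [List.mem_singleton] at h
        subst h
        exact hc1 x (hz x (List.mem_cons_self))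
    · rw [List.prod_append, map_conj_prod, hp]
      simp [pow_succ', mul_inv_rev, mul_assoc]

/-- The inverse of a positive word of length `n`, postmultiplied by `Δ ^ n`, is positive. -/
private lemma invRight (hc2 : ∀ x ∈ S, x⁻¹ * Δ ∈ S) :
    ∀ z : List G, (∀ w ∈ z, w ∈ S) →
      ∃ y : List G, y.length = z.length ∧ (∀ w ∈ y, w ∈ S) ∧
        y.prod = z.prod⁻¹ * Δ ^ z.length := by
  intro z
  induction z with
  | nil => exact fun _ => ⟨[], rfl, by simp, by simp⟩
  | cons x t ih =>
    intro hz
    obtain ⟨y, hl, hS, hp⟩ := ih (fun w hw => hz w (List.mem_cons_of_mem _ hw))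
    refine ⟨y ++ [(Δ ^ t.length)⁻¹ * (x⁻¹ * Δ) * Δ ^ t.length], by simp [hl], ?_, ?_⟩
    · intro w hw
      rcases List.mem_append.1 hw with h | h
      · exact hS w h
      · simp only [List.mem_singleton] at h
        subst h
        exact tauPow hc2 t.length (hc2 x (hz x (List.mem_cons_self)))
    · rw [List.prod_append, List.prod_singleton, hp]
      simp [pow_succ', mul_inv_rev, mul_assoc]

/-- Pushing `Δ⁻¹`'s to the right: any mixed word times `Δ ^ c` is positive, for
a suitable `c` bounded by the word length. -/
private lemma negPush (hc2 : ∀ x ∈ S, x⁻¹ * Δ ∈ S) :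
    ∀ z : List (G × Bool), (∀ p ∈ z, p.1 ∈ S) →
      ∃ (y : List G) (c : ℕ), c ≤ z.length ∧ y.length = z.length ∧ (∀ w ∈ y, w ∈ S) ∧
        y.prod = (z.map fun p => if p.2 then p.1 else p.1⁻¹).prod * Δ ^ c := by
  intro z
  induction z with
  | nil => exact fun _ => ⟨[], 0, by simp, rfl, by simp, by simp⟩
  | cons p t ih =>
    intro hz
    obtain ⟨y, c, hcle, hl, hS, hp⟩ := ih (fun q hq => hz q (List.mem_cons_of_mem _ hq))
    obtain ⟨x, bb⟩ := p
    have hxS : x ∈ S := hz (x, bb) List.mem_cons_self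
    cases bb with
    | true =>
      refine ⟨x :: y, c, by simpa using Nat.le_succ_of_le hcle, by simp [hl], ?_, ?_⟩
      · intro w hw
        rcases List.mem_cons.1 hw with h | h
        · subst h; exact hxS
        · exact hS w h
      · simp only [List.prod_cons, List.map_cons, if_pos, hp]
        simp [mul_assoc]
    | false =>
      refine ⟨(x⁻¹ * Δ) :: (y.map fun s => Δ⁻¹ * s * Δ), c + 1,
        by simpa using Nat.succ_le_succ hcle, by simp [hl], ?_, ?_⟩
      · intro w hw
        rcases List.mem_cons.1 hw with h | h
        · subst h; exact hc2 x hxS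
        · obtain ⟨s, hs, rfl⟩ := List.mem_map.1 h
          have := tau_mem hc2 (hS s hs)
          simpa using this
      · have hconj : ((y.map fun s => Δ⁻¹ * s * Δ)).prod = Δ⁻¹ * y.prod * Δ := by
          have := map_conj_prod' Δ y
          simpa using this
        simp only [List.prod_cons, hconj, hp, List.map_cons]
        simp [pow_succ, mul_assoc]

private lemma exists_word (hgen : Subgroup.closure S = ⊤) (β : G) :
    ∃ z : List (G × Bool), (∀ p ∈ z, p.1 ∈ S) ∧
      (z.map fun p => if p.2 then p.1 else p.1⁻¹).prod = β := by
  have hβ : β ∈ Subgroup.closure S := by rw [hgen]; trivial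
  induction hβ using Subgroup.closure_induction with
  | mem x hx => exact ⟨[(x, true)], by simp [hx], by simp⟩
  | one => exact ⟨[], by simp, by simp⟩
  | mul x y _ _ ihx ihy =>
    obtain ⟨zx, hx1, hx2⟩ := ihx
    obtain ⟨zy, hy1, hy2⟩ := ihy
    refine ⟨zx ++ zy, ?_, by simp [hx2, hy2]⟩
    intro p hp
    rcases List.mem_append.1 hp with h | h
    · exact hx1 p h
    · exact hy1 p h
  | inv x _ ihx =>
    obtain ⟨z, h1, h2⟩ := ihx
    refine ⟨z.reverse.map fun p => (p.1, !p.2), ?_, ?_⟩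
    · intro p hp
      obtain ⟨q, hq, rfl⟩ := List.mem_map.1 hp
      exact h1 q (List.mem_reverse.1 hq)
    · rw [← h2]
      exact word_inv_prod z

private lemma posLen_le' (S : Set G) {β : G} {z : List G}
    (hz : ∀ w ∈ z, w ∈ S) (hp : z.prod = β) : posLen S β ≤ z.length :=
  Nat.sInf_le ⟨z, rfl, hz, hp⟩

private lemma posLen_mem (S : Set G) {β : G}
    (h : ∃ z : List G, (∀ w ∈ z, w ∈ S) ∧ z.prod = β) :
    ∃ z : List G, z.length = posLen S β ∧ (∀ w ∈ z, w ∈ S) ∧ z.prod = β := by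
  obtain ⟨z, h1, h2⟩ := h
  exact Nat.sInf_mem (⟨z.length, z, rfl, h1, h2⟩ :
    {k | ∃ z : List G, z.length = k ∧ (∀ w ∈ z, w ∈ S) ∧ z.prod = β}.Nonempty)

end Helpers

/-- Abstract length formula: under the stated hypotheses on `L` and `Smin`, the word length
of every `β` over `S ∪ S⁻¹` equals `max{L(β),0} - min{Smin(β),0}`. -/
theorem stmt_4 {G : Type*} [Group G] (S : Set G) (Δ : G)
    (hgen : Subgroup.closure S = ⊤) (hΔ : Δ ∈ S)
    (hc1 : ∀ x ∈ S, Δ * x⁻¹ ∈ S) (hc2 : ∀ x ∈ S, x⁻¹ * Δ ∈ S)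
    (L Smin : G → ℤ)
    (ha : ∀ β : G, (∃ z : List G, (∀ w ∈ z, w ∈ S) ∧ z.prod = β) →
      L β = (posLen S β : ℤ) ∧ 0 ≤ Smin β)
    (hb : ∀ β : G, (∃ z : List G, (∀ w ∈ z, w ∈ S) ∧ z.prod = β⁻¹) →
      Smin β = -(posLen S β⁻¹ : ℤ) ∧ L β ≤ 0)
    (hc : ∀ (β : G) (k : ℤ), L (β * Δ ^ k) = L β + k ∧ Smin (β * Δ ^ k) = Smin β + k) :
    ∀ β : G, (wlen S β : ℤ) = max (L β) 0 - min (Smin β) 0 := by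
  -- translation facts for natural powers
  have hcn : ∀ (γ : G) (K : ℕ), L (γ * Δ ^ K) = L γ + K ∧ Smin (γ * Δ ^ K) = Smin γ + K := by
    intro γ K
    have := hc γ (K : ℤ)
    simpa [zpow_natCast] using this
  have fact1 : ∀ (γ : G) (K : ℕ), (∃ z : List G, (∀ w ∈ z, w ∈ S) ∧ z.prod = γ * Δ ^ K) →
      L γ + K = (posLen S (γ * Δ ^ K) : ℤ) ∧ 0 ≤ Smin γ + K := by
    intro γ K hw
    obtain ⟨h1, h2⟩ := ha _ hw
    obtain ⟨h3, h4⟩ := hcn γ K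
    exact ⟨by rw [← h3, h1], by rw [← h4]; exact h2⟩
  have fact2 : ∀ (γ : G) (j : ℕ), (∃ z : List G, (∀ w ∈ z, w ∈ S) ∧ z.prod = Δ ^ j * γ⁻¹) →
      Smin γ = (j : ℤ) - (posLen S (Δ ^ j * γ⁻¹) : ℤ) ∧ L γ ≤ (j : ℤ) := by
    intro γ j hw
    have hinv : (γ * Δ ^ (-(j : ℤ)))⁻¹ = Δ ^ j * γ⁻¹ := by
      rw [mul_inv_rev, zpow_neg, inv_inv, zpow_natCast]
    obtain ⟨h1, h2⟩ := hb (γ * Δ ^ (-(j : ℤ))) (by rw [hinv]; exact hw)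
    obtain ⟨h3, h4⟩ := hc γ (-(j : ℤ))
    rw [hinv] at h1
    constructor
    · rw [h4] at h1; omega
    · rw [h3] at h2; omega
  -- every element with `Smin ≥ 0` is positive
  have posOf : ∀ γ : G, 0 ≤ Smin γ → ∃ z : List G, (∀ w ∈ z, w ∈ S) ∧ z.prod = γ := by
    intro γ hγ
    obtain ⟨z0, hz0S, hz0p⟩ := exists_word hgen γ
    obtain ⟨q, c, hcle, hql, hqS, hqp⟩ := negPush hc2 z0 hz0S
    rw [hz0p] at hqp
    obtain ⟨y, hyl, hyS, hyp⟩ := invLeft hc1 q hqS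
    set n := q.length with hn
    have hword : (List.replicate c Δ ++ y).prod = Δ ^ n * γ⁻¹ := by
      rw [List.prod_append, List.prod_replicate, hyp, hqp, mul_inv_rev]
      rw [← mul_assoc, pow_mul_comm, mul_assoc, mul_inv_cancel_left]
    have hwordS : ∀ w ∈ List.replicate c Δ ++ y, w ∈ S := by
      intro w hw
      rcases List.mem_append.1 hw with h | h
      · rw [List.eq_of_mem_replicate h]; exact hΔ
      · exact hyS w h
    have hne : ∃ z : List G, (∀ w ∈ z, w ∈ S) ∧ z.prod = Δ ^ n * γ⁻¹ :=
      ⟨_, hwordS, hword⟩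
    obtain ⟨hSm, _⟩ := fact2 γ n hne
    obtain ⟨w, hwl, hwS, hwp⟩ := posLen_mem S hne
    have htle : w.length ≤ n := by omega
    obtain ⟨y2, hy2l, hy2S, hy2p⟩ := invRight hc2 w hwS
    refine ⟨y2 ++ List.replicate (n - w.length) Δ, ?_, ?_⟩
    · intro v hv
      rcases List.mem_append.1 hv with h | h
      · exact hy2S v h
      · rw [List.eq_of_mem_replicate h]; exact hΔ
    · rw [List.prod_append, List.prod_replicate, hy2p, hwp, mul_inv_rev, mul_assoc,
        ← pow_add, Nat.add_sub_cancel' htle, inv_inv, inv_mul_cancel_right]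
  intro β
  -- upper bound
  set b : ℕ := (-Smin β).toNat with hb_def
  set a : ℕ := (L β).toNat with ha_def
  have hbge : -Smin β ≤ (b : ℤ) := Int.self_le_toNat _
  have hsγ : 0 ≤ Smin (β * Δ ^ b) := by
    have := (hcn β b).2
    omega
  obtain ⟨g, hgS, hgp⟩ := posOf (β * Δ ^ b) hsγ
  obtain ⟨w1, hw1l, hw1S, hw1p⟩ := posLen_mem S ⟨g, hgS, hgp⟩
  have htL : (w1.length : ℤ) = L β + b := by
    have h1 := (fact1 β b ⟨g, hgS, hgp⟩).1
    omega
  set t := w1.length with ht_def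
  have hat : a ≤ t := by omega
  have htab : t - a ≤ b := by omega
  obtain ⟨y3, hy3l, hy3S, hy3p⟩ := invLeft hc1 (w1.drop a)
    (fun w hw => hw1S w (List.mem_of_mem_drop hw))
  have hdl : (w1.drop a).length = t - a := by simp [ht_def]
  set Q : List G := List.replicate (b - (t - a)) Δ ++ y3 with hQ_def
  have hQl : Q.length = b := by
    simp only [hQ_def, List.length_append, List.length_replicate, hy3l, hdl]
    omega
  have hQS : ∀ w ∈ Q, w ∈ S := by
    intro w hw
    rcases List.mem_append.1 hw with h | h
    · rw [List.eq_of_mem_replicate h]; exact hΔ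
    · exact hy3S w h
  have hQp : Q.prod = Δ ^ b * (w1.drop a).prod⁻¹ := by
    rw [hQ_def, List.prod_append, List.prod_replicate, hy3p, hdl, ← mul_assoc, ← pow_add,
      Nat.sub_add_cancel htab]
  set zf : List (G × Bool) :=
    (w1.take a).map (fun x => (x, true)) ++ (Q.reverse.map fun x => (x, false)) with hzf_def
  have hzfl : zf.length = a + b := by
    simp only [hzf_def, List.length_append, List.length_map, List.length_take,
      List.length_reverse, hQl]
    omega
  have hzfS : ∀ p ∈ zf, p.1 ∈ S := by
    intro p hp
    rcases List.mem_append.1 hp with h | h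
    · obtain ⟨x, hx, rfl⟩ := List.mem_map.1 h
      exact hw1S x (List.mem_of_mem_take hx)
    · obtain ⟨x, hx, rfl⟩ := List.mem_map.1 h
      exact hQS x (List.mem_reverse.1 hx)
  have hzfp : (zf.map fun p => if p.2 then p.1 else p.1⁻¹).prod = β := by
    rw [hzf_def, List.map_append, List.prod_append]
    have e1 : (((w1.take a).map fun x => (x, true)).map
        fun p => if p.2 then p.1 else p.1⁻¹) = w1.take a := by
      simp [List.map_map, Function.comp_def]
    have e2 : ((Q.reverse.map fun x => (x, false)).map
        fun p => if p.2 then p.1 else p.1⁻¹) = Q.reverse.map fun x => x⁻¹ := by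
      simp [List.map_map, Function.comp_def]
    rw [e1, e2, inv_rev_prod, hQp, mul_inv_rev, inv_inv, ← mul_assoc, ← List.prod_append,
      List.take_append_drop, hw1p, mul_assoc, mul_inv_cancel, mul_one]
  have hub : wlen S β ≤ a + b := Nat.sInf_le ⟨zf, hzfl, hzfS, hzfp⟩
  -- lower bound
  have hneW : {k | ∃ z : List (G × Bool), z.length = k ∧ (∀ p ∈ z, p.1 ∈ S) ∧
      (z.map fun p => if p.2 then p.1 else p.1⁻¹).prod = β}.Nonempty := by
    obtain ⟨z, h1, h2⟩ := exists_word hgen β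
    exact ⟨z.length, z, rfl, h1, h2⟩
  obtain ⟨z, hzl, hzS, hzp⟩ := Nat.sInf_mem hneW
  obtain ⟨q, c, hcle, hql, hqS, hqp⟩ := negPush hc2 z hzS
  rw [hzp] at hqp
  obtain ⟨hf1, hf2⟩ := fact1 β c ⟨q, hqS, hqp⟩
  have hple : posLen S (β * Δ ^ c) ≤ q.length := posLen_le' S hqS hqp
  have hwl : z.length = wlen S β := hzl
  -- conclude
  have h1 : (wlen S β : ℤ) ≤ a + b := by exact_mod_cast hub
  have h2 : ((L β).toNat : ℤ) = max (L β) 0 := Int.toNat_eq_max _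
  have h3 : ((-Smin β).toNat : ℤ) = max (-Smin β) 0 := Int.toNat_eq_max _
  omega
end
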